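/- A complex symmetric 2×2 matrix z satisfies Q(z) = 0 and H(z) = 0 if and only if z = λ·x for some λ ∈ ℂ and some real symmetric 2×2 matrix x with det x = 0. In other words, M_{0,0} = {λx : λ ∈ ℂ, x ∈ S₂(ℝ), det x = 0}, a union of a real one-parameter family of complex lines. -/

import Mathlib

private lemma core_re (a1 a2 b1 b2 d1 d2 : ℝ)
    (E1 : a1*d1 - a2*d2 = b1^2 - b2^2)
    (E2 : a1*d2 + a2*d1 = 2*b1*b2)
    (E3 : a1*d1 + a2*d2 = b1^2 + b2^2)
    (hb : b1^2 + b2^2 ≠ 0) :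
    a2*b1 - a1*b2 = 0 ∧ d2*b1 - d1*b2 = 0 := by
  have h4 : a1*d1 = b1^2 := by linarith
  have h5 : a2*d2 = b2^2 := by linarith
  have key : (a1*d2 - a2*d1)^2 = 0 := by
    linear_combination (a1*d2+a2*d1+2*b1*b2)*E2 - 4*a2*d2*h4 - 4*b1^2*h5
  have k : a1*d2 - a2*d1 = 0 := by
    exact sq_eq_zero_iff.mp key
  have k1 : a1*d2 = b1*b2 := by linarith
  have k2 : a2*d1 = b1*b2 := by linarith
  have hd0 : d1^2 + d2^2 ≠ 0 := by
    intro h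
    have hd1 : d1 = 0 := by nlinarith [sq_nonneg d1, sq_nonneg d2]
    have hd2 : d2 = 0 := by nlinarith [sq_nonneg d1, sq_nonneg d2]
    apply hb; linear_combination -h4 - h5 + a1*hd1 + a2*hd2
  have ha0 : a1^2 + a2^2 ≠ 0 := by
    intro h
    have ha1 : a1 = 0 := by nlinarith [sq_nonneg a1, sq_nonneg a2]
    have ha2 : a2 = 0 := by nlinarith [sq_nonneg a1, sq_nonneg a2]
    apply hb; linear_combination -h4 - h5 + d1*ha1 + d2*ha2
  constructor
  · have : (a2*b1 - a1*b2)*(d1^2+d2^2) = 0 := by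
      linear_combination b1*d1*k2 - b2*d1*h4 + b1*d2*h5 - b2*d2*k1
    rcases mul_eq_zero.mp this with h | h
    · exact h
    · exact absurd h hd0
  · have : (d2*b1 - d1*b2)*(a1^2+a2^2) = 0 := by
      linear_combination b1*a1*k1 - b2*a1*h4 + b1*a2*h5 - b2*a2*k2
    rcases mul_eq_zero.mp this with h | h
    · exact h
    · exact absurd h ha0

theorem M00_eq_union_of_complex_lines (z : Matrix (Fin 2) (Fin 2) ℂ)
    (hsym : z 0 1 = z 1 0) :
    (z 0 0 * z 1 1 - (z 0 1) ^ 2 = 0 ∧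
      (z 0 0 * starRingEnd ℂ (z 1 1)).re - ‖z 0 1‖ ^ 2 = 0) ↔
    ∃ (l : ℂ) (x : Matrix (Fin 2) (Fin 2) ℝ),
      x 0 1 = x 1 0 ∧ x 0 0 * x 1 1 - (x 0 1) ^ 2 = 0 ∧
      ∀ i j, z i j = l * (x i j : ℂ) := by
  constructor
  · rintro ⟨h1, h2⟩
    by_cases hb0 : z 0 1 = 0
    · have had : z 0 0 * z 1 1 = 0 := by rw [hb0] at h1; linear_combination h1
      rcases mul_eq_zero.mp had with h | h
      · refine ⟨z 1 1, ![![0,0],![0,1]], by simp, by simp, ?_⟩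
        intro i j; fin_cases i <;> fin_cases j <;>
          simp [h, hb0, ← hsym]
      · refine ⟨z 0 0, ![![1,0],![0,0]], by simp, by simp, ?_⟩
        intro i j; fin_cases i <;> fin_cases j <;>
          simp [h, hb0, ← hsym]
    · set a := z 0 0 with ha
      set b := z 0 1 with hb
      set d := z 1 1 with hd
      have E1 : a.re * d.re - a.im * d.im = b.re^2 - b.im^2 := by
        have := congrArg Complex.re h1
        simp [Complex.mul_re, pow_two] at this
        linarith
      have E2 : a.re * d.im + a.im * d.re = 2 * b.re * b.im := by
        have := congrArg Complex.im h1
        simp [Complex.mul_im, pow_two] at this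
        linarith
      have E3 : a.re * d.re + a.im * d.im = b.re^2 + b.im^2 := by
        simp [Complex.sq_norm, Complex.normSq_apply, Complex.mul_re,
          Complex.conj_re, Complex.conj_im] at h2
        linear_combination h2
      have hbns : b.re^2 + b.im^2 ≠ 0 := by
        intro h
        apply hb0
        have hbr : b.re = 0 := by nlinarith [sq_nonneg b.re, sq_nonneg b.im]
        have hbi : b.im = 0 := by nlinarith [sq_nonneg b.re, sq_nonneg b.im]
        exact Complex.ext (by simpa using hbr) (by simpa using hbi)
      obtain ⟨key1, key2⟩ := core_re a.re a.im b.re b.im d.re d.im E1 E2 E3 hbns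
      -- a/b and d/b are real
      have hnsq : Complex.normSq b ≠ 0 := by
        rw [Complex.normSq_apply]; intro h; apply hbns; linear_combination h
      have haim : (a/b).im = 0 := by
        rw [Complex.div_im]
        field_simp
        linear_combination key1
      have hdim : (d/b).im = 0 := by
        rw [Complex.div_im]
        field_simp
        linear_combination key2
      have hab : (a/b) = (((a/b).re : ℝ) : ℂ) := by
        exact Complex.ext (by simp) (by simp [haim])
      have hdb : (d/b) = (((d/b).re : ℝ) : ℂ) := by
        exact Complex.ext (by simp) (by simp [hdim])
      have hap : a = b * (((a/b).re : ℝ) : ℂ) := by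
        rw [← hab]; field_simp
      have hdp : d = b * (((d/b).re : ℝ) : ℂ) := by
        rw [← hdb]; field_simp
      have hprC : (((a/b).re * (d/b).re : ℝ) : ℂ) = 1 := by
        push_cast
        rw [← hab, ← hdb]
        field_simp
        linear_combination h1
      have hpr : (a/b).re * (d/b).re = 1 := by exact_mod_cast hprC
      refine ⟨b, ![![(a/b).re, 1], ![1, (d/b).re]], by simp, by simp [hpr], ?_⟩
      intro i j; fin_cases i <;> fin_cases j <;>
        simp [← ha, ← hb, ← hd, ← hsym] <;>
        first
          | exact hap
          | exact hdp
  · rintro ⟨l, x, hxs, hdet, hzx⟩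
    have c : ((x 0 0 : ℂ) * (x 1 1 : ℂ)) = ((x 0 1 : ℂ))^2 := by
      have : x 0 0 * x 1 1 = (x 0 1)^2 := by linarith
      exact_mod_cast congrArg (fun t : ℝ => (t : ℂ)) this
    constructor
    · rw [hzx 0 0, hzx 1 1, hzx 0 1]
      ring_nf
      linear_combination l^2 * c
    · rw [hzx 0 0, hzx 1 1, hzx 0 1]
      have cr : x 0 0 * x 1 1 = (x 0 1)^2 := by linarith
      simp [Complex.sq_norm, Complex.normSq_apply, Complex.mul_re,
        Complex.mul_im, Complex.conj_re, Complex.conj_im, Complex.ofReal_re, Complex.ofReal_im,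
        mul_pow, Complex.sq_norm, Complex.normSq_apply, sq_abs]
      nlinarith [cr]
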